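/- For each integer n ≥ 1, the function Φ_n is monotone increasing in each of its two variables on its domain: if 0 < δ ≤ δ' ≤ D then Φ_n(δ, D) ≤ Φ_n(δ', D), and if 0 < δ ≤ D ≤ D' then Φ_n(δ, D) ≤ Φ_n(δ, D'). -/

import Mathlib

open Real

/-- The inverse hyperbolic cosine. -/
noncomputable def arcosh (x : ℝ) : ℝ := Real.log (x + Real.sqrt (x ^ 2 - 1))

/-- The function `Φ_n`, defined for `0 < δ ≤ D`. -/
noncomputable def Phi (n : ℕ) (δ D : ℝ) : ℝ :=
  _root_.arcosh (Real.cosh (n * δ) +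
    (Real.cosh (n * δ) - 1) * (Real.cosh D - Real.cosh δ) / (Real.cosh δ + 1))

lemma arcosh_mono {a b : ℝ} (ha : 1 ≤ a) (hab : a ≤ b) : _root_.arcosh a ≤ _root_.arcosh b := by
  unfold _root_.arcosh
  have h1 : (0:ℝ) < a + Real.sqrt (a ^ 2 - 1) := by positivity
  apply Real.log_le_log h1
  have : Real.sqrt (a ^ 2 - 1) ≤ Real.sqrt (b ^ 2 - 1) := by
    apply Real.sqrt_le_sqrt; nlinarith
  linarith

lemma cosh_half (x : ℝ) : Real.cosh x = 2 * Real.cosh (x / 2) ^ 2 - 1 := by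
  have h := Real.cosh_two_mul (x / 2)
  rw [show (2:ℝ) * (x / 2) = x by ring] at h
  have h2 := Real.cosh_sq (x / 2)
  linarith

lemma cosh_sub_one (x : ℝ) : Real.cosh x - 1 = 2 * Real.sinh (x / 2) ^ 2 := by
  have := cosh_half x
  have h2 := Real.cosh_sq (x / 2)
  linarith

lemma cosh_add_one (x : ℝ) : Real.cosh x + 1 = 2 * Real.cosh (x / 2) ^ 2 := by
  have := cosh_half x
  linarith

lemma prod_to_sum (a b : ℝ) :
    2 * Real.sinh a * Real.cosh b = Real.sinh (a + b) + Real.sinh (a - b) := by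
  rw [Real.sinh_add, Real.sinh_sub]; ring

/-- The key ratio monotonicity. -/
lemma key (n : ℕ) (hn : 1 ≤ n) {δ δ' : ℝ} (h0 : 0 ≤ δ) (h : δ ≤ δ') :
    (Real.cosh (n * δ) - 1) / (Real.cosh δ + 1) ≤
      (Real.cosh (n * δ') - 1) / (Real.cosh δ' + 1) := by
  have hc : ∀ x : ℝ, (0:ℝ) < Real.cosh x + 1 := fun x => by
    have := Real.one_le_cosh x; linarith
  rw [div_le_div_iff₀ (hc δ) (hc δ')]
  rw [cosh_sub_one, cosh_add_one, cosh_sub_one, cosh_add_one]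
  have key2 : 2 * Real.sinh (n * δ / 2) * Real.cosh (δ' / 2) ≤
      2 * Real.sinh (n * δ' / 2) * Real.cosh (δ / 2) := by
    rw [prod_to_sum, prod_to_sum]
    have hn1 : (1:ℝ) ≤ (n:ℝ) := by exact_mod_cast hn
    have i1 : Real.sinh (n * δ / 2 + δ' / 2) ≤ Real.sinh (n * δ' / 2 + δ / 2) := by
      apply Real.sinh_le_sinh.mpr; nlinarith
    have i2 : Real.sinh (n * δ / 2 - δ' / 2) ≤ Real.sinh (n * δ' / 2 - δ / 2) := by
      apply Real.sinh_le_sinh.mpr; nlinarith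
    linarith
  have hnn : 0 ≤ 2 * Real.sinh (n * δ / 2) * Real.cosh (δ' / 2) := by
    have h1 : 0 ≤ Real.sinh (n * δ / 2) := Real.sinh_nonneg_iff.mpr (by positivity)
    have h2 := Real.cosh_pos (δ' / 2)
    positivity
  nlinarith [key2, hnn]

lemma phi_arg_eq (n : ℕ) (δ D : ℝ) :
    Real.cosh (n * δ) +
      (Real.cosh (n * δ) - 1) * (Real.cosh D - Real.cosh δ) / (Real.cosh δ + 1) =
    1 + (Real.cosh D + 1) * ((Real.cosh (n * δ) - 1) / (Real.cosh δ + 1)) := by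
  have hc : Real.cosh δ + 1 ≠ 0 := by have := Real.one_le_cosh δ; linarith
  field_simp
  ring

/-- For each `n ≥ 1`, the function `Φ_n` is monotone increasing in each of its variables on
the domain `{(δ, D) : 0 < δ ≤ D}`. -/
theorem stmt5 (n : ℕ) (hn : 1 ≤ n) :
    (∀ δ δ' D : ℝ, 0 < δ → δ ≤ δ' → δ' ≤ D → Phi n δ D ≤ Phi n δ' D) ∧
    (∀ δ D D' : ℝ, 0 < δ → δ ≤ D → D ≤ D' → Phi n δ D ≤ Phi n δ D') := by
  have hratio_nonneg : ∀ δ : ℝ, 0 ≤ (Real.cosh (n * δ) - 1) / (Real.cosh δ + 1) := by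
    intro δ
    have h1 := Real.one_le_cosh (n * δ)
    have h2 := Real.one_le_cosh δ
    apply div_nonneg <;> linarith
  constructor
  · intro δ δ' D h0 h1 h2
    unfold Phi
    rw [phi_arg_eq, phi_arg_eq]
    have hD1 : (0:ℝ) ≤ Real.cosh D + 1 := by have := Real.one_le_cosh D; linarith
    have hk := key n hn h0.le h1
    have harg : (1:ℝ) ≤ 1 + (Real.cosh D + 1) * ((Real.cosh (n * δ) - 1) / (Real.cosh δ + 1)) := by
      nlinarith [hratio_nonneg δ]
    apply arcosh_mono harg
    nlinarith [hratio_nonneg δ]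
  · intro δ D D' h0 h1 h2
    unfold Phi
    rw [phi_arg_eq, phi_arg_eq]
    have harg : (1:ℝ) ≤ 1 + (Real.cosh D + 1) * ((Real.cosh (n * δ) - 1) / (Real.cosh δ + 1)) := by
      have := Real.one_le_cosh D; nlinarith [hratio_nonneg δ]
    apply arcosh_mono harg
    have hDD : Real.cosh D ≤ Real.cosh D' := by
      apply Real.cosh_le_cosh.mpr
      rw [abs_of_nonneg (by linarith), abs_of_nonneg (by linarith)]
      exact h2
    nlinarith [hratio_nonneg δ]
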